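/- There is a constant c > 0 such that for every d ≥ 2 dividing n, f_d(n) ≥ c·n!·n^{-1+1/d}, where f_d(n) is the number of permutations in S_n all of whose cycle lengths are divisible by d. -/

import Mathlib

open Function Equiv List



-- assume part1 & part2 here for testing
lemma mod_add_eq_self_iff {len i n : ℕ} (h : i < len) : (i + n) % len = i ↔ len ∣ n := by
  have hr : n % len < len := Nat.mod_lt _ (by omega)
  rw [Nat.add_mod, Nat.mod_eq_of_lt h, Nat.dvd_iff_mod_eq_zero]
  by_cases hc : i + n % len < len
  · rw [Nat.mod_eq_of_lt hc]; omega
  · rw [Nat.mod_eq_sub_mod (le_of_not_gt hc), Nat.mod_eq_of_lt (by omega)]; omega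

lemma formPerm_minimalPeriod {α : Type*} [DecidableEq α] {l : List α} (hn : l.Nodup) {x : α}
    (hx : x ∈ l) : Function.minimalPeriod (⇑l.formPerm) x = l.length := by
  obtain ⟨i, h, rfl⟩ := List.getElem_of_mem hx
  have key : ∀ n : ℕ, Function.IsPeriodicPt (⇑l.formPerm) n l[i] ↔ l.length ∣ n := by
    intro n
    have h2 : Function.IsPeriodicPt (⇑l.formPerm) n l[i] ↔ (l.formPerm ^ n) l[i] = l[i] := by
      simp [Function.IsPeriodicPt, Function.IsFixedPt, Equiv.Perm.iterate_eq_pow]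
    rw [h2, List.formPerm_pow_apply_getElem l hn n i h, List.Nodup.getElem_inj_iff hn]
    exact mod_add_eq_self_iff h
  refine Nat.dvd_antisymm ?_ ?_
  · exact Function.IsPeriodicPt.minimalPeriod_dvd ((key l.length).2 dvd_rfl)
  · exact (key _).1 (Function.isPeriodicPt_minimalPeriod _ _)

section
variable {α : Type*} [DecidableEq α] {l : List α} {σ' : Equiv.Perm α}

omit [DecidableEq α] in
lemma fix_compl_mem {x : α} (h1 : ∀ y ∈ l, σ' y = y) (hx : x ∉ l) : σ' x ∉ l := by
  intro hmem
  have : σ' (σ' x) = σ' x := h1 _ hmem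
  exact hx (σ'.injective this ▸ hmem)

lemma pow_mul_formPerm_mem (h1 : ∀ y ∈ l, σ' y = y) :
    ∀ (i : ℕ) (x : α), x ∈ l →
      ((σ' * l.formPerm) ^ i) x = (l.formPerm ^ i) x ∧ (l.formPerm ^ i) x ∈ l := by
  intro i
  induction i with
  | zero => intro x hx; simpa using hx
  | succ i ih =>
    intro x hx
    obtain ⟨h_eq, h_mem⟩ := ih x hx
    have hc : l.formPerm ((l.formPerm ^ i) x) ∈ l := List.formPerm_apply_mem_of_mem h_mem
    constructor
    · rw [pow_succ', Equiv.Perm.mul_apply, h_eq, Equiv.Perm.mul_apply, pow_succ',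
        Equiv.Perm.mul_apply, h1 _ hc]
    · rw [pow_succ', Equiv.Perm.mul_apply]; exact hc

lemma pow_mul_formPerm_not_mem (h1 : ∀ y ∈ l, σ' y = y) :
    ∀ (i : ℕ) (x : α), x ∉ l →
      ((σ' * l.formPerm) ^ i) x = (σ' ^ i) x ∧ (σ' ^ i) x ∉ l := by
  intro i
  induction i with
  | zero => intro x hx; simpa using hx
  | succ i ih =>
    intro x hx
    obtain ⟨h_eq, h_mem⟩ := ih x hx
    constructor
    · rw [pow_succ', Equiv.Perm.mul_apply, h_eq, Equiv.Perm.mul_apply,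
        List.formPerm_apply_of_notMem h_mem, pow_succ', Equiv.Perm.mul_apply]
    · rw [pow_succ', Equiv.Perm.mul_apply]; exact fix_compl_mem h1 h_mem

lemma minimalPeriod_mul_formPerm_mem (h1 : ∀ y ∈ l, σ' y = y) {x : α} (hx : x ∈ l) :
    Function.minimalPeriod (⇑(σ' * l.formPerm)) x = Function.minimalPeriod (⇑l.formPerm) x := by
  rw [Function.minimalPeriod_eq_minimalPeriod_iff]
  intro n
  simp only [Function.IsPeriodicPt, Function.IsFixedPt, Equiv.Perm.iterate_eq_pow]
  rw [(pow_mul_formPerm_mem h1 n x hx).1]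

lemma minimalPeriod_mul_formPerm_not_mem (h1 : ∀ y ∈ l, σ' y = y) {x : α} (hx : x ∉ l) :
    Function.minimalPeriod (⇑(σ' * l.formPerm)) x = Function.minimalPeriod (⇑σ') x := by
  rw [Function.minimalPeriod_eq_minimalPeriod_iff]
  intro n
  simp only [Function.IsPeriodicPt, Function.IsFixedPt, Equiv.Perm.iterate_eq_pow]
  rw [(pow_mul_formPerm_not_mem h1 n x hx).1]

end

section
variable {α β : Type*} {p : β → Prop} [DecidablePred p] (σ τ : Equiv.Perm α) (e : α ≃ Subtype p)

lemma extendDomain_mul' : (σ * τ).extendDomain e = σ.extendDomain e * τ.extendDomain e :=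
  (Equiv.Perm.extendDomain_trans e τ σ).symm

lemma extendDomain_pow' (n : ℕ) : (σ.extendDomain e) ^ n = (σ ^ n).extendDomain e := by
  induction n with
  | zero =>
    rw [pow_zero, pow_zero]
    exact (Equiv.Perm.extendDomain_refl e).symm
  | succ n ih => rw [pow_succ, ih, pow_succ, extendDomain_mul']

lemma minimalPeriod_extendDomain (b : α) :
    Function.minimalPeriod (⇑(σ.extendDomain e)) ((e b : β)) = Function.minimalPeriod (⇑σ) b := by
  rw [Function.minimalPeriod_eq_minimalPeriod_iff]
  intro n
  simp only [Function.IsPeriodicPt, Function.IsFixedPt, Equiv.Perm.iterate_eq_pow]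
  rw [extendDomain_pow']
  constructor
  · intro h
    have h' : ((σ ^ n).extendDomain e) ((e b : β)) = ((e b : β)) := h
    rw [Equiv.Perm.extendDomain_apply_image] at h'
    exact e.injective (Subtype.coe_injective h')
  · intro h
    show ((σ ^ n).extendDomain e) ((e b : β)) = ((e b : β))
    rw [Equiv.Perm.extendDomain_apply_image, h]

end

/-- `fd d n` is the number of permutations of `n` points all of whose cycle
lengths (including fixed points, which are cycles of length 1) are divisible
by `d`. -/
noncomputable def fd (d n : ℕ) : ℕ :=
  Nat.card {π : Equiv.Perm (Fin n) // ∀ x, d ∣ Function.minimalPeriod (⇑π) x}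

section Build
variable {N L1 : ℕ}

def blist (a : Fin L1 ↪ Fin N) : List (Fin (N + 1)) :=
  Fin.last N :: List.ofFn (fun i => Fin.castSucc (a i))

lemma blist_length (a : Fin L1 ↪ Fin N) : (blist a).length = L1 + 1 := by
  simp [blist]

lemma blist_nodup (a : Fin L1 ↪ Fin N) : (blist a).Nodup := by
  rw [blist, List.nodup_cons]
  constructor
  · simp only [List.mem_ofFn, Set.mem_range, not_exists]
    intro i hi
    exact absurd hi (ne_of_lt (Fin.castSucc_lt_last _))
  · rw [List.nodup_ofFn]
    exact fun i j hij => a.injective (Fin.castSucc_injective _ hij)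

lemma last_mem_blist (a : Fin L1 ↪ Fin N) : Fin.last N ∈ blist a :=
  List.mem_cons_self

lemma card_compl (a : Fin L1 ↪ Fin N) :
    Fintype.card {x : Fin (N + 1) // x ∉ blist a} = N - L1 := by
  rw [Fintype.card_subtype_compl]
  have h1 : Fintype.card {x : Fin (N + 1) // x ∈ blist a} = L1 + 1 := by
    rw [Fintype.card_of_subtype (blist a).toFinset (fun x => by simp),
      List.toFinset_card_of_nodup (blist_nodup a), blist_length]
  rw [h1, Fintype.card_fin]
  omega

noncomputable def complEquiv (a : Fin L1 ↪ Fin N) :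
    Fin (N - L1) ≃ {x : Fin (N + 1) // x ∉ blist a} :=
  (Fintype.equivFinOfCardEq (card_compl a)).symm

noncomputable def buildPerm (a : Fin L1 ↪ Fin N) (σ : Equiv.Perm (Fin (N - L1))) :
    Equiv.Perm (Fin (N + 1)) :=
  (σ.extendDomain (complEquiv a)) * (blist a).formPerm

lemma buildPerm_fix (a : Fin L1 ↪ Fin N) (σ : Equiv.Perm (Fin (N - L1))) :
    ∀ y ∈ blist a, (σ.extendDomain (complEquiv a)) y = y := fun _ hy =>
  Equiv.Perm.extendDomain_apply_not_subtype _ _ (not_not_intro hy)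

lemma buildPerm_minimalPeriod_mem (a : Fin L1 ↪ Fin N) (σ : Equiv.Perm (Fin (N - L1)))
    {x : Fin (N + 1)} (hx : x ∈ blist a) :
    Function.minimalPeriod (⇑(buildPerm a σ)) x = L1 + 1 := by
  rw [buildPerm, minimalPeriod_mul_formPerm_mem (buildPerm_fix a σ) hx,
    formPerm_minimalPeriod (blist_nodup a) hx, blist_length]

lemma buildPerm_minimalPeriod_compl (a : Fin L1 ↪ Fin N) (σ : Equiv.Perm (Fin (N - L1)))
    (b : Fin (N - L1)) :
    Function.minimalPeriod (⇑(buildPerm a σ)) ((complEquiv a b : Fin (N + 1))) =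
      Function.minimalPeriod (⇑σ) b := by
  rw [buildPerm, minimalPeriod_mul_formPerm_not_mem (buildPerm_fix a σ) (complEquiv a b).2,
    minimalPeriod_extendDomain]

lemma buildPerm_pow_last (a : Fin L1 ↪ Fin N) (σ : Equiv.Perm (Fin (N - L1))) (i : ℕ)
    (hi : i < L1 + 1) :
    ((buildPerm a σ) ^ i) (Fin.last N) = (blist a)[i]'(by rw [blist_length]; omega) := by
  have hz := last_mem_blist a
  rw [buildPerm, (pow_mul_formPerm_mem (buildPerm_fix a σ) i _ hz).1]
  have h0 : (0 : ℕ) < (blist a).length := by rw [blist_length]; omega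
  have hlast : Fin.last N = (blist a)[0]'h0 := rfl
  rw [hlast, List.formPerm_pow_apply_getElem _ (blist_nodup a) i 0 h0]
  have hidx : (0 + i) % (blist a).length = i := by
    rw [blist_length, Nat.zero_add, Nat.mod_eq_of_lt hi]
  simp only [hidx]

lemma buildPerm_apply_compl (a : Fin L1 ↪ Fin N) (σ : Equiv.Perm (Fin (N - L1)))
    (b : Fin (N - L1)) :
    (buildPerm a σ) ((complEquiv a b : Fin (N + 1))) = ((complEquiv a (σ b) : Fin (N + 1))) := by
  have hnm : ((complEquiv a b : Fin (N + 1))) ∉ blist a := (complEquiv a b).2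
  rw [buildPerm, Equiv.Perm.mul_apply, List.formPerm_apply_of_notMem hnm,
    Equiv.Perm.extendDomain_apply_image]

end Build

lemma buildPerm_good {N L1 d : ℕ} (hdvd : d ∣ L1 + 1) (a : Fin L1 ↪ Fin N)
    (σ : Equiv.Perm (Fin (N - L1))) (hσ : ∀ x, d ∣ Function.minimalPeriod (⇑σ) x) :
    ∀ x, d ∣ Function.minimalPeriod (⇑(buildPerm a σ)) x := by
  intro x
  by_cases hx : x ∈ blist a
  · rw [buildPerm_minimalPeriod_mem a σ hx]; exact hdvd
  · have hx2 : x = ((complEquiv a ((complEquiv a).symm ⟨x, hx⟩)) : Fin (N + 1)) := by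
      rw [Equiv.apply_symm_apply]
    rw [hx2, buildPerm_minimalPeriod_compl]
    exact hσ _

lemma key_ineq (d m N : ℕ) (hd : 2 ≤ d) (hN : N + 1 = d * m) :
    ∑ k ∈ Finset.range m, N.descFactorial (d * (k + 1) - 1) * fd d (N - (d * (k + 1) - 1))
      ≤ fd d (N + 1) := by
  classical
  have hdvd : ∀ k : Fin m, d ∣ (d * (k.1 + 1) - 1) + 1 := by
    intro k
    have h1 : 1 ≤ d * (k.1 + 1) := Nat.mul_pos (by omega : 0 < d) (Nat.succ_pos _)
    have h2 : (d * (k.1 + 1) - 1) + 1 = d * (k.1 + 1) := by omega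
    rw [h2]; exact Dvd.intro _ rfl
  let D := (Σ k : Fin m, (Fin (d * (k.1 + 1) - 1) ↪ Fin N) ×
      {σ : Equiv.Perm (Fin (N - (d * (k.1 + 1) - 1))) //
        ∀ x, d ∣ Function.minimalPeriod (⇑σ) x})
  let Ψ : D → {π : Equiv.Perm (Fin (N + 1)) // ∀ x, d ∣ Function.minimalPeriod (⇑π) x} :=
    fun t => ⟨buildPerm t.2.1 t.2.2.1, buildPerm_good (hdvd t.1) t.2.1 t.2.2.1 t.2.2.2⟩
  have hinj : Function.Injective Ψ := by
    rintro ⟨k1, a1, σ1⟩ ⟨k2, a2, σ2⟩ h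
    have hπ : buildPerm a1 σ1.1 = buildPerm a2 σ2.1 := Subtype.ext_iff.1 h
    have hL : (d * (k1.1 + 1) - 1) + 1 = (d * (k2.1 + 1) - 1) + 1 := by
      have h1 := buildPerm_minimalPeriod_mem a1 σ1.1 (last_mem_blist a1)
      have h2 := buildPerm_minimalPeriod_mem a2 σ2.1 (last_mem_blist a2)
      rw [hπ] at h1
      rw [← h1, ← h2]
    have hk : k1 = k2 := by
      apply Fin.ext
      have h1 : 1 ≤ d * (k1.1 + 1) := Nat.mul_pos (by omega : 0 < d) (Nat.succ_pos _)
      have h2 : 1 ≤ d * (k2.1 + 1) := Nat.mul_pos (by omega : 0 < d) (Nat.succ_pos _)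
      have h3 : d * (k1.1 + 1) = d * (k2.1 + 1) := by omega
      have := Nat.eq_of_mul_eq_mul_left (show 0 < d by omega) h3
      omega
    subst hk
    have ha : a1 = a2 := by
      ext i
      have hi : (i.1 + 1) < (d * (k1.1 + 1) - 1) + 1 := by omega
      have e1 := buildPerm_pow_last a1 σ1.1 (i.1 + 1) hi
      have e2 := buildPerm_pow_last a2 σ2.1 (i.1 + 1) hi
      rw [hπ] at e1
      have h3 := e1.symm.trans e2
      simp only [blist, List.getElem_cons_succ, List.getElem_ofFn] at h3
      have h4 : (a1 i : Fin N) = a2 i := Fin.castSucc_injective _ (by simpa using h3)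
      exact congrArg Fin.val h4
    subst ha
    have hσ : σ1 = σ2 := by
      apply Subtype.ext
      apply Equiv.ext
      intro b
      have e1 := buildPerm_apply_compl a1 σ1.1 b
      have e2 := buildPerm_apply_compl a1 σ2.1 b
      rw [hπ] at e1
      have h3 := e1.symm.trans e2
      exact (complEquiv a1).injective (Subtype.coe_injective h3)
    subst hσ
    rfl
  have hcard := Nat.card_le_card_of_injective Ψ hinj
  have hD : Nat.card D = ∑ k ∈ Finset.range m,
      N.descFactorial (d * (k + 1) - 1) * fd d (N - (d * (k + 1) - 1)) := by
    rw [Nat.card_eq_fintype_card, Fintype.card_sigma,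
      ← Fin.sum_univ_eq_sum_range (fun k => N.descFactorial (d * (k + 1) - 1) *
        fd d (N - (d * (k + 1) - 1))) m]
    congr 1
    ext k
    rw [Fintype.card_prod, Fintype.card_embedding_eq, Fintype.card_fin, Fintype.card_fin]
    congr 1
    rw [fd, Nat.card_eq_fintype_card]
  rw [fd]
  rw [← hD]
  exact hcard



lemma fd_zero (d : ℕ) : fd d 0 = 1 := by
  haveI : Unique {π : Equiv.Perm (Fin 0) // ∀ x, d ∣ Function.minimalPeriod (⇑π) x} :=
    { default := ⟨1, fun x => x.elim0⟩
      uniq := fun a => Subtype.ext (by ext x; exact x.elim0) }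
  exact Nat.card_unique

noncomputable def Bprod (d m : ℕ) : ℝ :=
  ∏ k ∈ Finset.range m, ((k : ℝ) + 1 / d) / (k + 1)

lemma Bprod_zero (d : ℕ) : Bprod d 0 = 1 := by simp [Bprod]

lemma Bprod_succ (d m : ℕ) : Bprod d (m + 1) = Bprod d m * (((m : ℝ) + 1 / d) / (m + 1)) :=
  Finset.prod_range_succ _ _

lemma Bprod_pos {d : ℕ} (hd : 1 ≤ d) (m : ℕ) : 0 < Bprod d m := by
  have hd0 : (0 : ℝ) < d := by exact_mod_cast hd
  exact Finset.prod_pos fun k _ => div_pos (by positivity) (by positivity)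

lemma sum_Bprod {d : ℕ} (hd : 1 ≤ d) : ∀ m : ℕ,
    ∑ j ∈ Finset.range m, Bprod d j = d * m * Bprod d m := by
  intro m
  induction m with
  | zero => simp
  | succ m ih =>
    have hd0 : (d : ℝ) ≠ 0 := by positivity
    rw [Finset.sum_range_succ, ih, Bprod_succ]
    have hm1 : ((m : ℝ) + 1) ≠ 0 := by positivity
    push_cast
    field_simp

lemma Bprod_ge {d : ℕ} (hd : 2 ≤ d) :
    ∀ m : ℕ, 1 ≤ m → (1 / 2 : ℝ) * ((d * m : ℕ) : ℝ) ^ ((1 : ℝ) / d - 1) ≤ Bprod d m := by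
  have hd0 : (0 : ℝ) < d := by exact_mod_cast (by omega : 0 < d)
  intro m
  induction m with
  | zero => omega
  | succ m ih =>
    intro _
    rcases Nat.eq_zero_or_pos m with rfl | hm
    · -- base case m+1 = 1
      rw [Bprod_succ, Bprod_zero]
      simp only [Nat.cast_zero, zero_add, mul_one, one_mul, Nat.mul_one]
      have h2 : ((d : ℝ)) ^ ((1 : ℝ) / d - 1) = (d : ℝ) ^ ((1 : ℝ) / d) * (d : ℝ)⁻¹ := by
        rw [Real.rpow_sub hd0, Real.rpow_one, div_eq_mul_inv]
      have h3 : (d : ℝ) ^ ((1 : ℝ) / d) ≤ 2 := by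
        have hdle : (d : ℝ) ≤ (2 : ℝ) ^ (d : ℝ) := by
          rw [show ((2:ℝ)) ^ (d:ℝ) = ((2:ℝ)) ^ (d:ℕ) by rw [Real.rpow_natCast]]
          exact_mod_cast (Nat.lt_two_pow_self (n := d)).le
        calc (d : ℝ) ^ ((1 : ℝ) / d) ≤ ((2 : ℝ) ^ (d : ℝ)) ^ ((1 : ℝ) / d) :=
              Real.rpow_le_rpow (le_of_lt hd0) hdle (by positivity)
          _ = 2 := by
              rw [← Real.rpow_mul (by norm_num), mul_one_div, div_self (ne_of_gt hd0),
                Real.rpow_one]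
      rw [h2]
      have hinv : (0:ℝ) ≤ (d : ℝ)⁻¹ := by positivity
      have h5 := mul_le_mul_of_nonneg_right h3 hinv
      rw [div_one, one_div]
      set X : ℝ := (d:ℝ) ^ ((1:ℝ)/d) with hX
      rw [one_div]
      linarith
    · -- inductive step, m ≥ 1
      have ihm := ih hm
      have hm0 : (0 : ℝ) < m := by exact_mod_cast hm
      set a : ℝ := 1 / d with ha
      have ha0 : 0 < a := by positivity
      have ha1 : a ≤ 1 := by
        rw [ha, div_le_one hd0]; exact_mod_cast (by omega : 1 ≤ d)
      set b : ℝ := 1 - a with hb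
      have hb0 : 0 ≤ b := by linarith
      set x : ℝ := (m : ℝ) / (m + 1) with hx
      have hx0 : 0 < x := by positivity
      have key : x ^ b ≤ ((m : ℝ) + a) / (m + 1) := by
        have hgm := Real.geom_mean_le_arith_mean2_weighted hb0 (le_of_lt ha0)
          (le_of_lt hx0) (zero_le_one) (by rw [hb]; ring)
        rw [Real.one_rpow, mul_one] at hgm
        calc x ^ b ≤ b * x + a * 1 := hgm
          _ = ((m : ℝ) + a) / (m + 1) := by
              rw [hx, hb]; field_simp; ring
      have hsplit : ((d * (m + 1) : ℕ) : ℝ) ^ (a - 1) =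
          ((d * m : ℕ) : ℝ) ^ (a - 1) * x ^ b := by
        have h1 : ((d * (m + 1) : ℕ) : ℝ) = ((d * m : ℕ) : ℝ) * (((m : ℝ) + 1) / m) := by
          push_cast; field_simp
        have h2 : (0 : ℝ) < ((d * m : ℕ) : ℝ) := by
          push_cast; positivity
        rw [h1, Real.mul_rpow (le_of_lt h2) (by positivity)]
        congr 1
        have h3 : x = (((m : ℝ) + 1) / m)⁻¹ := by
          rw [hx, inv_div]
        rw [h3, Real.inv_rpow (by positivity), ← Real.rpow_neg (by positivity)]
        congr 1
        rw [hb]; ring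
      calc (1 / 2 : ℝ) * ((d * (m + 1) : ℕ) : ℝ) ^ (a - 1)
          = (1 / 2) * ((d * m : ℕ) : ℝ) ^ (a - 1) * x ^ b := by rw [hsplit]; ring
        _ ≤ Bprod d m * x ^ b :=
            mul_le_mul_of_nonneg_right ihm (Real.rpow_nonneg (le_of_lt hx0) _)
        _ ≤ Bprod d m * (((m : ℝ) + a) / (m + 1)) :=
            mul_le_mul_of_nonneg_left key (le_of_lt (Bprod_pos (by omega) m))
        _ = Bprod d (m + 1) := by rw [Bprod_succ, ha]


lemma main_lb {d : ℕ} (hd : 2 ≤ d) : ∀ m : ℕ, ((d * m).factorial : ℝ) * Bprod d m ≤ (fd d (d * m) : ℝ) := by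
  intro m
  induction m using Nat.strong_induction_on with
  | _ m ih =>
    rcases Nat.eq_zero_or_pos m with rfl | hm
    · simp [Bprod_zero, fd_zero]
    · have hdm : 1 ≤ d * m := Nat.mul_pos (by omega) hm
      obtain ⟨N, hN⟩ : ∃ N, N + 1 = d * m := ⟨d * m - 1, by omega⟩
      have hkey := key_ineq d m N hd hN
      have hcast : ((∑ k ∈ Finset.range m,
          N.descFactorial (d * (k + 1) - 1) * fd d (N - (d * (k + 1) - 1)) : ℕ) : ℝ)
          ≤ (fd d (N + 1) : ℝ) := by exact_mod_cast hkey
      rw [hN] at hcast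
      push_cast at hcast
      refine le_trans ?_ hcast
      have hterm : ∀ k ∈ Finset.range m,
          (N.factorial : ℝ) * Bprod d (m - 1 - k) ≤
            (N.descFactorial (d * (k + 1) - 1) : ℝ) * (fd d (N - (d * (k + 1) - 1)) : ℝ) := by
        intro k hk
        rw [Finset.mem_range] at hk
        set j := m - 1 - k with hj
        have hjm : j < m := by omega
        have hsum : d * (k + 1) + d * j = d * m := by
          rw [← Nat.mul_add]; congr 1; omega
        have h1 : 1 ≤ d * (k + 1) := Nat.mul_pos (by omega) (by omega)
        have hLle : d * (k + 1) - 1 ≤ N := by omega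
        have hsub : N - (d * (k + 1) - 1) = d * j := by omega
        have hdf : (N - (d * (k + 1) - 1)).factorial * N.descFactorial (d * (k + 1) - 1)
            = N.factorial := Nat.factorial_mul_descFactorial hLle
        rw [hsub] at hdf
        have hih := ih j hjm
        rw [hsub]
        calc (N.factorial : ℝ) * Bprod d j
            = (N.descFactorial (d * (k + 1) - 1) : ℝ) * (((d * j).factorial : ℝ) * Bprod d j) := by
              rw [← hdf]; push_cast; ring
          _ ≤ (N.descFactorial (d * (k + 1) - 1) : ℝ) * (fd d (d * j) : ℝ) :=
              mul_le_mul_of_nonneg_left hih (by positivity)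
      calc ((d * m).factorial : ℝ) * Bprod d m
          = (N.factorial : ℝ) * (∑ j ∈ Finset.range m, Bprod d j) := by
            rw [sum_Bprod (by omega : 1 ≤ d) m, ← hN]
            push_cast [Nat.factorial_succ]
            have hNr : ((N : ℝ) + 1) = (d : ℝ) * m := by exact_mod_cast hN
            linear_combination (↑N.factorial * Bprod d m) * hNr
        _ = ∑ k ∈ Finset.range m, (N.factorial : ℝ) * Bprod d (m - 1 - k) := by
            rw [← Finset.mul_sum, Finset.sum_range_reflect]
        _ ≤ ∑ k ∈ Finset.range m,
              (N.descFactorial (d * (k + 1) - 1) : ℝ) * (fd d (N - (d * (k + 1) - 1)) : ℝ) :=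
            Finset.sum_le_sum hterm

theorem stmt_3 :
    ∃ c : ℝ, 0 < c ∧ ∀ d n : ℕ, 2 ≤ d → d ∣ n → 0 < n →
      c * (n.factorial : ℝ) * (n : ℝ) ^ (-1 + 1 / (d : ℝ) : ℝ) ≤ (fd d n : ℝ) := by
  refine ⟨1 / 2, by norm_num, ?_⟩
  intro d n hd hdvd hn
  obtain ⟨m, rfl⟩ := hdvd
  have hm : 1 ≤ m := by
    by_contra h
    push_neg at h
    interval_cases m <;> omega
  have hB := Bprod_ge hd m hm
  have hmain := main_lb hd m
  have hexp : (-1 + 1 / (d : ℝ) : ℝ) = (1 : ℝ) / d - 1 := by ring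
  rw [hexp]
  calc (1 / 2 : ℝ) * ((d * m).factorial : ℝ) * (((d * m : ℕ) : ℝ)) ^ ((1 : ℝ) / d - 1)
      = (((d * m).factorial : ℝ)) * ((1 / 2 : ℝ) * (((d * m : ℕ) : ℝ)) ^ ((1 : ℝ) / d - 1)) := by
        ring
    _ ≤ (((d * m).factorial : ℝ)) * Bprod d m := by
        apply mul_le_mul_of_nonneg_left hB (by positivity)
    _ ≤ (fd d (d * m) : ℝ) := hmain
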